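/- Let D ⊆ (Fin 2 → ℝ) be a compact set and let q belong to the topological frontier of convexHull ℝ D. Then either q is an extreme point of convexHull ℝ D, or there exist v, w ∈ D with v ≠ q and w ≠ q such that q ∈ segment ℝ v w. -/

import Mathlib

open Set

lemma rep12 (f : (Fin 2 → ℝ) →ₗ[ℝ] ℝ) (z : Fin 2 → ℝ) :
    f z = z 0 * f (Pi.single 0 1) + z 1 * f (Pi.single 1 1) := by
  have hz : z = z 0 • (Pi.single 0 1 : Fin 2 → ℝ) + z 1 • (Pi.single 1 1 : Fin 2 → ℝ) := by
    funext j; fin_cases j <;> simp [Pi.single_apply]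
  conv_lhs => rw [hz]
  rw [map_add, map_smul, map_smul]
  simp [smul_eq_mul]

lemma compactHull12 {D : Set (Fin 2 → ℝ)} (hD : IsCompact D) :
    IsCompact (convexHull ℝ D) := by
  classical
  let φ : (Fin 3 → ℝ) × (Fin 3 → (Fin 2 → ℝ)) → (Fin 2 → ℝ) := fun p => ∑ i, p.1 i • p.2 i
  have hφ : Continuous φ := by
    apply continuous_finset_sum
    intro i _
    exact ((continuous_apply i).comp continuous_fst).smul
      ((continuous_apply i).comp continuous_snd)
  have hT : IsCompact ((stdSimplex ℝ (Fin 3)) ×ˢ (Set.univ.pi fun _ : Fin 3 => D)) :=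
    IsCompact.prod (isCompact_stdSimplex (𝕜 := ℝ) (ι := Fin 3)) (isCompact_univ_pi fun _ => hD)
  have himg : convexHull ℝ D = φ '' ((stdSimplex ℝ (Fin 3)) ×ˢ (Set.univ.pi fun _ : Fin 3 => D)) := by
    apply Set.Subset.antisymm
    · rw [convexHull_eq_union]
      refine Set.iUnion_subset fun t => Set.iUnion_subset fun htD => Set.iUnion_subset fun hti => ?_
      intro p hp
      have h3 : Module.finrank ℝ (Fin 2 → ℝ) = 2 := by simp
      have hcard : Fintype.card ↥t ≤ 3 := by
        refine hti.card_le_finrank_succ.trans ?_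
        have h2 := Nat.add_le_add_right
          (Submodule.finrank_le (vectorSpan ℝ (Set.range ((↑) : t → (Fin 2 → ℝ))))) 1
        omega
      obtain ⟨e⟩ : Nonempty (↥t ↪ Fin 3) :=
        Function.Embedding.nonempty_of_card_le (by simpa using hcard)
      rw [Finset.convexHull_eq] at hp
      obtain ⟨w, hw0, hw1, hwc⟩ := hp
      have htne : t.Nonempty := by
        rcases t.eq_empty_or_nonempty with rfl | h
        · simp at hw1
        · exact h
      obtain ⟨a₀, ha₀⟩ := htne
      let x : Fin 3 → (Fin 2 → ℝ) :=
        fun j => if h : ∃ i : ↥t, e i = j then ((h.choose : ↥t) : Fin 2 → ℝ) else a₀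
      let ω : Fin 3 → ℝ := fun j => if h : ∃ i : ↥t, e i = j then w h.choose else 0
      have hxe : ∀ i : ↥t, x (e i) = (i : Fin 2 → ℝ) := by
        intro i
        have h : ∃ i' : ↥t, e i' = e i := ⟨i, rfl⟩
        simp only [x, dif_pos h]
        rw [e.injective h.choose_spec]
      have hωe : ∀ i : ↥t, ω (e i) = w i := by
        intro i
        have h : ∃ i' : ↥t, e i' = e i := ⟨i, rfl⟩
        simp only [ω, dif_pos h]
        rw [e.injective h.choose_spec]
      have hnot : ∀ j, (¬∃ i : ↥t, e i = j) → ω j = 0 := by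
        intro j hj; simp only [ω, dif_neg hj]
      have hsum : ∀ {α : Type} [AddCommMonoid α] (G : Fin 3 → α),
          (∀ j, (¬∃ i : ↥t, e i = j) → G j = 0) → ∑ j, G j = ∑ i : ↥t, G (e i) := by
        intro α _ G hG
        rw [← Finset.sum_map Finset.univ e G]
        refine (Finset.sum_subset (Finset.subset_univ _) fun j _ hj => ?_).symm
        exact hG j fun ⟨i, hi⟩ => hj (Finset.mem_map.2 ⟨i, Finset.mem_univ i, hi⟩)
      refine ⟨⟨ω, x⟩, ⟨⟨?_, ?_⟩, ?_⟩, ?_⟩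
      · intro j
        by_cases h : ∃ i : ↥t, e i = j
        · simp only [ω, dif_pos h]; exact hw0 _ h.choose.2
        · simp only [ω, dif_neg h]; exact le_rfl
      · rw [hsum ω hnot, Finset.sum_congr rfl fun i _ => hωe i, Finset.sum_coe_sort t w]
        exact hw1
      · intro j _
        by_cases h : ∃ i : ↥t, e i = j
        · simp only [x, dif_pos h]; exact htD h.choose.2
        · simp only [x, dif_neg h]; exact htD ha₀
      · show ∑ j, ω j • x j = p
        rw [hsum (fun j => ω j • x j) (fun j hj => by simp only [hnot j hj, zero_smul]),
          Finset.sum_congr rfl fun i _ => by rw [hωe i, hxe i],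
          Finset.sum_coe_sort t (fun y => w y • y), ← hwc,
          Finset.centerMass_eq_of_sum_1 _ _ hw1]
        rfl
    · rintro _ ⟨⟨ω, x⟩, ⟨hω, hx⟩, rfl⟩
      exact (convex_convexHull ℝ D).sum_mem (fun i _ => hω.1 i) hω.2
        (fun i _ => subset_convexHull ℝ D (hx i (Set.mem_univ i)))
  rw [himg]
  exact hT.image hφ

theorem stmt12 (D : Set (Fin 2 → ℝ)) (hD : IsCompact D) (q : Fin 2 → ℝ)
    (hq : q ∈ frontier (convexHull ℝ D)) :
    q ∈ Set.extremePoints ℝ (convexHull ℝ D) ∨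
      ∃ v ∈ D, ∃ w ∈ D, v ≠ q ∧ w ≠ q ∧ q ∈ segment ℝ v w := by
  classical
  have hconv : Convex ℝ (convexHull ℝ D) := convex_convexHull ℝ D
  have hcomp : IsCompact (convexHull ℝ D) := compactHull12 hD
  have hq' : q ∈ convexHull ℝ D := by
    have h := frontier_subset_closure hq
    rwa [hcomp.isClosed.closure_eq] at h
  have hqni : q ∉ interior (convexHull ℝ D) := fun h => hq.2 h
  obtain ⟨f, hfle, hfne⟩ : ∃ f : (Fin 2 → ℝ) →ₗ[ℝ] ℝ,
      (∀ z ∈ convexHull ℝ D, f z ≤ f q) ∧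
      ¬(f (Pi.single 0 1) = 0 ∧ f (Pi.single 1 1) = 0) := by
    by_cases hint : (interior (convexHull ℝ D)).Nonempty
    · obtain ⟨g, hg⟩ := geometric_hahn_banach_open_point hconv.interior isOpen_interior hqni
      obtain ⟨a, ha⟩ := hint
      refine ⟨g.toLinearMap, ?_, ?_⟩
      · intro z hz
        have hc : Continuous fun t : ℝ => g (t • a + (1 - t) • z) := by fun_prop
        have htend : Filter.Tendsto (fun t : ℝ => g (t • a + (1 - t) • z))
            (nhdsWithin 0 (Set.Ioi 0)) (nhds (g z)) := by
          have h0 : g ((0:ℝ) • a + (1 - (0:ℝ)) • z) = g z := by norm_num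
          simpa [h0] using (hc.tendsto 0).mono_left nhdsWithin_le_nhds
        refine le_of_tendsto htend ?_
        filter_upwards [Ioo_mem_nhdsGT_of_mem
          (Set.mem_Ico.2 ⟨le_refl (0:ℝ), one_pos⟩)] with t ht
        exact (hg _ (hconv.combo_interior_self_mem_interior ha hz ht.1
          (by linarith [ht.2]) (by ring))).le
      · rintro ⟨h0, h1⟩
        have hza : g.toLinearMap a = 0 := by rw [rep12 g.toLinearMap a, h0, h1]; ring
        have hzq : g.toLinearMap q = 0 := by rw [rep12 g.toLinearMap q, h0, h1]; ring
        have := hg a ha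
        simp only [ContinuousLinearMap.coe_coe] at hza hzq
        rw [hza, hzq] at this
        exact lt_irrefl _ this
    · have hspan : affineSpan ℝ (convexHull ℝ D) ≠ ⊤ := by
        intro h
        exact hint (hconv.interior_nonempty_iff_affineSpan_eq_top.2 h)
      have hnsp : ((affineSpan ℝ (convexHull ℝ D) : AffineSubspace ℝ (Fin 2 → ℝ)) :
          Set (Fin 2 → ℝ)).Nonempty := ⟨q, subset_affineSpan ℝ _ hq'⟩
      have hdir : (affineSpan ℝ (convexHull ℝ D)).direction < ⊤ := by
        refine lt_top_iff_ne_top.2 fun h => hspan ?_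
        exact (AffineSubspace.direction_eq_top_iff_of_nonempty hnsp).1 h
      obtain ⟨f, hf0, hfmap⟩ :=
        Submodule.exists_dual_map_eq_bot_of_lt_top hdir inferInstance
      have hconst : ∀ z ∈ convexHull ℝ D, f z = f q := by
        intro z hz
        have hv : z -ᵥ q ∈ (affineSpan ℝ (convexHull ℝ D)).direction :=
          AffineSubspace.vsub_mem_direction (subset_affineSpan ℝ _ hz)
            (subset_affineSpan ℝ _ hq')
        have hmem : f (z -ᵥ q) ∈ Submodule.map f (affineSpan ℝ (convexHull ℝ D)).direction :=
          Submodule.mem_map_of_mem hv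
        rw [hfmap, Submodule.mem_bot] at hmem
        rw [vsub_eq_sub, map_sub] at hmem
        linarith
      refine ⟨f, fun z hz => (hconst z hz).le, ?_⟩
      rintro ⟨h0, h1⟩
      apply hf0
      refine LinearMap.ext fun z => ?_
      rw [rep12 f z, h0, h1]
      simp
  set c0 := f (Pi.single 0 1) with hc0
  set c1 := f (Pi.single 1 1) with hc1
  have hrep : ∀ z, f z = z 0 * c0 + z 1 * c1 := by
    intro z; rw [hc0, hc1]; exact rep12 f z
  set g : (Fin 2 → ℝ) → ℝ := fun z => -c1 * z 0 + c0 * z 1 with hgdef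
  have hgc : Continuous g := by rw [hgdef]; fun_prop
  have hglin : ∀ (u v : ℝ) (y₁ y₂ : Fin 2 → ℝ),
      g (u • y₁ + v • y₂) = u * g y₁ + v * g y₂ := by
    intro u v y₁ y₂
    simp only [hgdef, Pi.add_apply, Pi.smul_apply, smul_eq_mul]
    ring
  have hpos : 0 < c0 ^ 2 + c1 ^ 2 := by
    rcases not_and_or.1 hfne with h | h
    · have h2 : 0 < c0 ^ 2 := by positivity
      nlinarith [sq_nonneg c1]
    · have h2 : 0 < c1 ^ 2 := by positivity
      nlinarith [sq_nonneg c0]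
  have hinj : ∀ z w : Fin 2 → ℝ, f z = f w → g z = g w → z = w := by
    intro z w h1 h2
    rw [hrep z, hrep w] at h1
    simp only [hgdef] at h2
    have d0 : (z 0 - w 0) * (c0 ^ 2 + c1 ^ 2) = 0 := by linear_combination c0 * h1 - c1 * h2
    have d1 : (z 1 - w 1) * (c0 ^ 2 + c1 ^ 2) = 0 := by linear_combination c1 * h1 + c0 * h2
    have e0 : z 0 - w 0 = 0 := by
      rcases mul_eq_zero.1 d0 with h | h
      · exact h
      · linarith
    have e1 : z 1 - w 1 = 0 := by
      rcases mul_eq_zero.1 d1 with h | h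
      · exact h
      · linarith
    funext j
    fin_cases j
    · show z 0 = w 0; linarith
    · show z 1 = w 1; linarith
  set F : Set (Fin 2 → ℝ) := convexHull ℝ D ∩ {z | f z = f q} with hFdef
  have hFcomp : IsCompact F :=
    hcomp.inter_right (isClosed_eq f.continuous_of_finiteDimensional continuous_const)
  have hqF : q ∈ F := ⟨hq', rfl⟩
  have hface : ∀ x₁ ∈ convexHull ℝ D, ∀ x₂ ∈ convexHull ℝ D, ∀ u v : ℝ,
      0 < u → 0 < v → u + v = 1 → u • x₁ + v • x₂ ∈ F → x₁ ∈ F ∧ x₂ ∈ F := by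
    intro x₁ h₁ x₂ h₂ u v hu hv huv hm
    have hf1 : f x₁ ≤ f q := hfle _ h₁
    have hf2 : f x₂ ≤ f q := hfle _ h₂
    have hsum : u * f x₁ + v * f x₂ = f q := by
      have h := hm.2
      simp only [Set.mem_setOf_eq, map_add, map_smul, smul_eq_mul] at h
      exact h
    have hx : u * f q + v * f q = f q := by rw [← add_mul, huv, one_mul]
    have hA : 0 ≤ u * (f q - f x₁) := mul_nonneg hu.le (by linarith)
    have hB : 0 ≤ v * (f q - f x₂) := mul_nonneg hv.le (by linarith)
    have hC : u * (f q - f x₁) + v * (f q - f x₂) = 0 := by linear_combination hx - hsum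
    have hD1 := (mul_eq_zero.1 (by linarith : u * (f q - f x₁) = 0)).resolve_left hu.ne'
    have hD2 := (mul_eq_zero.1 (by linarith : v * (f q - f x₂) = 0)).resolve_left hv.ne'
    exact ⟨⟨h₁, show f x₁ = f q by linarith⟩, ⟨h₂, show f x₂ = f q by linarith⟩⟩
  have hkey : ∀ (h : (Fin 2 → ℝ) → ℝ),
      (∀ (u v : ℝ) (y₁ y₂ : Fin 2 → ℝ), h (u • y₁ + v • y₂) = u * h y₁ + v * h y₂) →
      (∀ z w, f z = f w → h z = h w → z = w) →
      ∀ p ∈ F, (∀ z ∈ F, h z ≤ h p) → p ∈ Set.extremePoints ℝ (convexHull ℝ D) := by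
    intro h hlin hinj' p hpF hmax
    rw [mem_extremePoints]
    refine ⟨hpF.1, fun x₁ h₁ x₂ h₂ hseg => ?_⟩
    obtain ⟨u, v, hu, hv, huv, heq⟩ := hseg
    obtain ⟨hx₁F, hx₂F⟩ := hface x₁ h₁ x₂ h₂ u v hu hv huv (by rw [heq]; exact hpF)
    have hsum : u * h x₁ + v * h x₂ = h p := by rw [← heq, hlin]
    have hh1 : h x₁ ≤ h p := hmax _ hx₁F
    have hh2 : h x₂ ≤ h p := hmax _ hx₂F
    have hx : u * h p + v * h p = h p := by rw [← add_mul, huv, one_mul]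
    have hA : 0 ≤ u * (h p - h x₁) := mul_nonneg hu.le (by linarith)
    have hB : 0 ≤ v * (h p - h x₂) := mul_nonneg hv.le (by linarith)
    have hC : u * (h p - h x₁) + v * (h p - h x₂) = 0 := by linear_combination hx - hsum
    have hD1 := (mul_eq_zero.1 (by linarith : u * (h p - h x₁) = 0)).resolve_left hu.ne'
    have hD2 := (mul_eq_zero.1 (by linarith : v * (h p - h x₂) = 0)).resolve_left hv.ne'
    have hhe1 : h x₁ = h p := by linarith
    have hhe2 : h x₂ = h p := by linarith
    have hfe1 : f x₁ = f p := hx₁F.2.trans hpF.2.symm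
    have hfe2 : f x₂ = f p := hx₂F.2.trans hpF.2.symm
    exact ⟨hinj' _ _ hfe1 hhe1, hinj' _ _ hfe2 hhe2⟩
  obtain ⟨a, haF, hamin⟩ := hFcomp.exists_isMinOn ⟨q, hqF⟩ hgc.continuousOn
  obtain ⟨b, hbF, hbmax⟩ := hFcomp.exists_isMaxOn ⟨q, hqF⟩ hgc.continuousOn
  have haext : a ∈ Set.extremePoints ℝ (convexHull ℝ D) := by
    refine hkey (fun z => -(g z)) (fun u v y₁ y₂ => by show -g (u • y₁ + v • y₂) = u * -g y₁ + v * -g y₂; rw [hglin]; ring)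
      (fun z w h1 h2 => hinj z w h1 (by linarith [neg_injective h2])) a haF
      (fun z hz => neg_le_neg (isMinOn_iff.1 hamin z hz))
  have hbext : b ∈ Set.extremePoints ℝ (convexHull ℝ D) :=
    hkey g hglin hinj b hbF (fun z hz => isMaxOn_iff.1 hbmax z hz)
  by_cases hqe : q ∈ Set.extremePoints ℝ (convexHull ℝ D)
  · exact Or.inl hqe
  right
  have haD : a ∈ D := extremePoints_convexHull_subset haext
  have hbD : b ∈ D := extremePoints_convexHull_subset hbext
  refine ⟨a, haD, b, hbD, ?_, ?_, ?_⟩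
  · rintro rfl; exact hqe haext
  · rintro rfl; exact hqe hbext
  have hqe' := hqe
  rw [mem_extremePoints] at hqe'
  push_neg at hqe'
  obtain ⟨x₁, h₁, x₂, h₂, hseg, hne⟩ := hqe' hq'
  obtain ⟨u, v, hu, hv, huv, hequ⟩ := hseg
  obtain ⟨hx₁F, hx₂F⟩ := hface x₁ h₁ x₂ h₂ u v hu hv huv (by rw [hequ]; exact hqF)
  have hx12 : x₁ ≠ x₂ := by
    rintro rfl
    have hx : x₁ = q := by rw [← hequ, ← add_smul, huv, one_smul]
    exact hne hx (hx ▸ rfl)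
  have hgx : g x₁ ≠ g x₂ := fun h => hx12 (hinj _ _ (hx₁F.2.trans hx₂F.2.symm) h)
  have hm1 : g a ≤ g x₁ := isMinOn_iff.1 hamin _ hx₁F
  have hm2 : g a ≤ g x₂ := isMinOn_iff.1 hamin _ hx₂F
  have hM1 : g x₁ ≤ g b := isMaxOn_iff.1 hbmax _ hx₁F
  have hM2 : g x₂ ≤ g b := isMaxOn_iff.1 hbmax _ hx₂F
  have hmM : g a < g b := by rcases hgx.lt_or_gt with h | h <;> linarith
  have hqa : g a ≤ g q := isMinOn_iff.1 hamin _ hqF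
  have hqb : g q ≤ g b := isMaxOn_iff.1 hbmax _ hqF
  have hden : g b - g a ≠ 0 := by linarith
  set t := (g b - g q) / (g b - g a) with htdef
  set s := (g q - g a) / (g b - g a) with hsdef
  have hts : t + s = 1 := by rw [htdef, hsdef, ← add_div, div_eq_one_iff_eq hden]; ring
  have e1 : f (t • a + s • b) = f q := by
    rw [map_add, map_smul, map_smul, smul_eq_mul, smul_eq_mul, haF.2, hbF.2]
    linear_combination f q * hts
  have e2 : g (t • a + s • b) = g q := by
    rw [hglin, htdef, hsdef]
    field_simp
    ring
  exact ⟨t, s, div_nonneg (by linarith) (by linarith), div_nonneg (by linarith) (by linarith),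
    hts, hinj _ _ e1 e2⟩
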